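/- Let X be a random variable taking values in [0,1] and let μ := E[X]. Then e^{−μ} ≤ E[e^{−X}] ≤ e^{−μ}·(1 + Var(X)). -/

import Mathlib

open MeasureTheory ProbabilityTheory

lemma exp_neg_le_quad {t : ℝ} (ht : -1 ≤ t) : Real.exp (-t) ≤ 1 - t + t ^ 2 := by
  rcases le_or_gt t 1 with h1 | h1
  · have habs : |(-t)| ≤ 1 := by rw [abs_neg, abs_le]; constructor <;> linarith
    have := Real.exp_bound habs (n := 2)
    simp only [Finset.sum_range_succ, Finset.sum_range_zero] at this
    norm_num at this
    have h2 : Real.exp (-t) - (1 - t) ≤ t ^ 2 * (3 / 4) := by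
      have := (abs_le.mp this).2
      nlinarith [this]
    nlinarith [sq_nonneg t]
  · have : Real.exp (-t) ≤ 1 := by
      rw [Real.exp_le_one_iff]; linarith
    nlinarith [sq_nonneg t]

/-- If `X` is a random variable with values in `[0,1]` (a.s.) and `μ = E[X]`, then
`e^{−μ} ≤ E[e^{−X}] ≤ e^{−μ}·(1 + Var(X))`. -/
theorem exp_neg_expectation_bounds {Ω : Type*} [MeasureSpace Ω]
    [IsProbabilityMeasure (ℙ : Measure Ω)] (X : Ω → ℝ)
    (hXm : AEStronglyMeasurable X ℙ) (hX01 : ∀ᵐ ω ∂(ℙ : Measure Ω), X ω ∈ Set.Icc (0 : ℝ) 1) :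
    Real.exp (-(∫ ω, X ω)) ≤ ∫ ω, Real.exp (-(X ω)) ∧
      ∫ ω, Real.exp (-(X ω)) ≤ Real.exp (-(∫ ω, X ω)) * (1 + variance X ℙ) := by
  set m := ∫ ω, X ω with hm
  have hbound : ∀ᵐ ω ∂(ℙ : Measure Ω), ‖X ω‖ ≤ 1 := by
    filter_upwards [hX01] with ω hω
    rw [Real.norm_eq_abs, abs_le]; exact ⟨by linarith [hω.1], hω.2⟩
  have hX2 : MemLp X 2 ℙ := MemLp.of_bound hXm 1 hbound
  have hXi : Integrable X ℙ := hX2.integrable (by norm_num)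
  have hm0 : 0 ≤ m := integral_nonneg_of_ae (by filter_upwards [hX01] with ω hω using hω.1)
  have hm1 : m ≤ 1 := by
    have := integral_mono_ae hXi (integrable_const 1)
      (by filter_upwards [hX01] with ω hω using hω.2)
    simpa using this
  have hexpm : AEStronglyMeasurable (fun ω => Real.exp (-(X ω))) ℙ :=
    (Real.continuous_exp.comp continuous_neg).comp_aestronglyMeasurable hXm
  have hexpi : Integrable (fun ω => Real.exp (-(X ω))) ℙ := by
    refine (MemLp.of_bound hexpm 1 ?_).integrable le_rfl
    filter_upwards [hX01] with ω hω
    rw [Real.norm_eq_abs, abs_of_pos (Real.exp_pos _), Real.exp_le_one_iff]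
    linarith [hω.1]
  have hsq : Integrable (fun ω => (X ω - m) ^ 2) ℙ := by
    have := (hX2.sub (memLp_const m)).integrable_sq
    simpa using this
  constructor
  · -- lower bound
    have hle : ∀ ω, Real.exp (-m) * (1 + (m - X ω)) ≤ Real.exp (-(X ω)) := by
      intro ω
      have h := Real.add_one_le_exp (m - X ω)
      have : Real.exp (-m) * (1 + (m - X ω)) ≤ Real.exp (-m) * Real.exp (m - X ω) := by
        apply mul_le_mul_of_nonneg_left (by linarith) (Real.exp_pos _).le
      rw [← Real.exp_add] at this
      convert this using 2
      ring
    have hi1 : Integrable (fun ω => (1 + m) - X ω) ℙ := ((integrable_const ((1:ℝ)+m)).sub hXi).congr (by filter_upwards with ω; simp)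
    have hint : Integrable (fun ω => Real.exp (-m) * (1 + (m - X ω))) ℙ := by
      have := hi1.const_mul (Real.exp (-m))
      apply this.congr
      filter_upwards with ω; ring
    have := integral_mono hint hexpi hle
    calc Real.exp (-m) = ∫ ω, Real.exp (-m) * (1 + (m - X ω)) ∂ℙ := by
          have : (fun ω => Real.exp (-m) * (1 + (m - X ω)))
              = fun ω => Real.exp (-m) * ((1 + m) - X ω) := by
            funext ω; ring
          rw [this, integral_const_mul, integral_sub (integrable_const _) hXi]
          simp [← hm]
      _ ≤ _ := this
  · -- upper bound
    have hvar : variance X ℙ = ∫ ω, (X ω - m) ^ 2 := by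
      rw [variance_eq_integral hXm.aemeasurable]
    have hle : ∀ᵐ ω ∂(ℙ : Measure Ω),
        Real.exp (-(X ω)) ≤ Real.exp (-m) * (1 - (X ω - m) + (X ω - m) ^ 2) := by
      filter_upwards [hX01] with ω hω
      have ht : -1 ≤ X ω - m := by linarith [hω.1]
      have h := exp_neg_le_quad ht
      have h2 : Real.exp (-(X ω)) = Real.exp (-m) * Real.exp (-(X ω - m)) := by
        rw [← Real.exp_add]; ring_nf
      rw [h2]
      exact mul_le_mul_of_nonneg_left h (Real.exp_pos _).le
    have hi1 : Integrable (fun ω => (1 + m) - X ω) ℙ := ((integrable_const ((1:ℝ)+m)).sub hXi).congr (by filter_upwards with ω; simp)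
    have hi2 : Integrable (fun ω => ((1 + m) - X ω) + (X ω - m) ^ 2) ℙ := hi1.add hsq
    have hint : Integrable (fun ω => Real.exp (-m) * (1 - (X ω - m) + (X ω - m) ^ 2)) ℙ := by
      have := hi2.const_mul (Real.exp (-m))
      apply this.congr
      filter_upwards with ω; ring
    have hmono := integral_mono_ae hexpi hint hle
    calc ∫ ω, Real.exp (-(X ω)) ≤ ∫ ω, Real.exp (-m) * (1 - (X ω - m) + (X ω - m) ^ 2) ∂ℙ :=
          hmono
      _ = Real.exp (-m) * (1 + variance X ℙ) := by
          have heq : (fun ω => Real.exp (-m) * (1 - (X ω - m) + (X ω - m) ^ 2))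
              = fun ω => Real.exp (-m) * (((1 + m) - X ω) + (X ω - m) ^ 2) := by
            funext ω; ring
          rw [heq, integral_const_mul, integral_add hi1 hsq,
            integral_sub (integrable_const _) hXi, hvar]
          simp [← hm]
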